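/- arXiv:1103.3873 — 2 statements merged into one kernel-verified Lean document; each statement's English description precedes it below -/
import Mathlib

section
/- Let F be a free group on a set Z and let {w_i : i ∈ I} be a set of words satisfying the small cancellation condition C'(1/12). Then the subgroup of F generated by {w_i} is free, freely generated by the w_i. -/
namespace Paper

/-- The formal inverse of a signed word. -/
def wordInv {α : Type} (w : List (α × Bool)) : List (α × Bool) :=
  (w.map fun p => (p.1, !p.2)).reverse

/-- `u` is a cyclic shift of `w` or of `w⁻¹`. -/
def CyclicShiftOf {α : Type} (w u : List (α × Bool)) : Prop :=
  ∃ n : ℕ, u = w.rotate n ∨ u = (wordInv w).rotate n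

/-- The small cancellation condition `C'(1/12)` for a set of words:
for every two different cyclic shifts `u, v` of words in `Q^{±1}`, the length of
their maximal common prefix is smaller than `(1/12)·min(|u|,|v|)`. -/
def C12 {α : Type} (Q : Set (List (α × Bool))) : Prop :=
  ∀ u v : List (α × Bool),
    (∃ w ∈ Q, CyclicShiftOf w u) → (∃ w ∈ Q, CyclicShiftOf w v) → u ≠ v →
      ∀ p : List (α × Bool), p <+: u → p <+: v → 12 * p.length < min u.length v.length

/-- The small cancellation condition `C'(1/12)` for an indexed family of words. -/
def FamC12 {ι α : Type} (w : ι → List (α × Bool)) : Prop :=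
  ∀ (a b : ι) (u v : List (α × Bool)),
    CyclicShiftOf (w a) u → CyclicShiftOf (w b) v → ¬(a = b ∧ u = v) →
      ∀ p : List (α × Bool), p <+: u → p <+: v → 12 * p.length < min u.length v.length

/-- A positive word, viewed as a signed word. -/
def signed {α : Type} (w : List α) : List (α × Bool) := w.map fun c => (c, true)

/-- `C'(1/12)` for a set of positive words. -/
def posC12 {α : Type} (Q : Set (List α)) : Prop := C12 (signed '' Q)

/-- A signed word is (freely) reduced. -/
def ReducedW {α : Type} [DecidableEq α] (w : List (α × Bool)) : Prop :=
  FreeGroup.reduce w = w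

/-- A signed word is cyclically reduced. -/
def CyclicallyReducedW {α : Type} [DecidableEq α] (w : List (α × Bool)) : Prop :=
  FreeGroup.reduce (w ++ w) = w ++ w

end Paper
namespace Paper

set_option linter.unusedSectionVars false

open FreeGroup List

/-- The "non-cancelling adjacency" relation: two adjacent letters do not form
an inverse pair. -/
def Rel {α : Type} (p q : α × Bool) : Prop := p.1 = q.1 → p.2 = q.2

variable {α : Type} [DecidableEq α]

lemma not_chain'_decomp : ∀ {M : List (α × Bool)}, ¬ List.Chain' Rel M →
    ∃ (L₁ : List (α × Bool)) (z : α) (b : Bool) (L₂ : List (α × Bool)),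
      M = L₁ ++ (z, b) :: (z, !b) :: L₂
  | [], h => absurd List.isChain_nil h
  | [p], h => absurd (List.isChain_singleton p) h
  | p :: q :: M, h => by
    by_cases hpq : Rel p q
    · have h2 : ¬ List.Chain' Rel (q :: M) := fun hc => h (List.isChain_cons_cons.mpr ⟨hpq, hc⟩)
      obtain ⟨L₁, z, b, L₂, hM⟩ := not_chain'_decomp h2
      exact ⟨p :: L₁, z, b, L₂, by rw [hM]; rfl⟩
    · refine ⟨[], p.1, p.2, M, ?_⟩
      have h1 : p.1 = q.1 ∧ ¬ (p.2 = q.2) := by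
        by_contra hcon
        exact hpq fun he => by tauto
      have hq : q = (p.1, !p.2) := Prod.ext h1.1.symm (by
        cases hp2 : p.2 <;> cases hq2 : q.2 <;> simp_all)
      simp [hq]

lemma chain'_reduce (L : List (α × Bool)) : List.Chain' Rel (FreeGroup.reduce L) := by
  by_contra h
  obtain ⟨L₁, z, b, L₂, hd⟩ := not_chain'_decomp h
  exact FreeGroup.reduce.not hd

lemma reduce_eq_self_of_chain' {L : List (α × Bool)} (h : List.Chain' Rel L) :
    FreeGroup.reduce L = L := by
  rcases (FreeGroup.reduce.red (L := L)).cases_head with he | ⟨M, hstep, _⟩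
  · exact he.symm
  · cases hstep with
    | @not L₁ L₂ z b =>
      have hinf : [(z, b), (z, !b)] <:+: (L₁ ++ (z, b) :: (z, !b) :: L₂) :=
        ⟨L₁, L₂, by simp⟩
      have := List.isChain_pair.mp (h.infix hinf)
      simp [Rel] at this

lemma reduce_eq_self_iff {L : List (α × Bool)} :
    FreeGroup.reduce L = L ↔ List.Chain' Rel L :=
  ⟨fun h => h ▸ chain'_reduce L, reduce_eq_self_of_chain'⟩

lemma invRev_append' (A B : List (α × Bool)) :
    FreeGroup.invRev (A ++ B) = FreeGroup.invRev B ++ FreeGroup.invRev A := by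
  simp [FreeGroup.invRev]

lemma chain'_invRev {L : List (α × Bool)} (h : List.Chain' Rel L) :
    List.Chain' Rel (FreeGroup.invRev L) := by
  rw [FreeGroup.invRev, List.Chain', List.isChain_reverse]
  refine List.isChain_map_of_isChain _ ?_ h
  intro a b hr h1
  simp only at h1 ⊢
  rw [hr h1.symm]

lemma cancel : ∀ (n : ℕ) (a b : List (α × Bool)), a.length ≤ n →
    List.Chain' Rel a → List.Chain' Rel b →
    ∃ a₁ c b₁, a = a₁ ++ c ∧ b = FreeGroup.invRev c ++ b₁ ∧
      FreeGroup.reduce (a ++ b) = a₁ ++ b₁ := by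
  intro n
  induction n with
  | zero =>
    intro a b hlen ha hb
    have hae : a = [] := List.eq_nil_of_length_eq_zero (Nat.le_zero.mp hlen)
    subst hae
    exact ⟨[], [], b, by simp, by simp [FreeGroup.invRev], by
      simpa using reduce_eq_self_of_chain' hb⟩
  | succ n ih =>
    intro a b hlen ha hb
    rcases List.eq_nil_or_concat a with rfl | ⟨a', p, rfl⟩
    · exact ⟨[], [], b, by simp, by simp [FreeGroup.invRev], by
        simpa using reduce_eq_self_of_chain' hb⟩
    rw [List.concat_eq_append] at *
    rcases b with _ | ⟨q, b'⟩
    · exact ⟨a' ++ [p], [], [], by simp, by simp [FreeGroup.invRev], by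
        simpa using reduce_eq_self_of_chain' ha⟩
    by_cases hpq : p.1 = q.1 ∧ p.2 = !q.2
    · -- cancelling junction
      have hp : p = (q.1, !q.2) := Prod.ext hpq.1 hpq.2
      have hstep : FreeGroup.Red.Step (a' ++ [p] ++ q :: b') (a' ++ b') := by
        have he : a' ++ [p] ++ q :: b' = a' ++ (q.1, !q.2) :: (q.1, !(!q.2)) :: b' := by
          rw [hp]; simp
        rw [he]
        exact FreeGroup.Red.Step.not
      have hredeq : FreeGroup.reduce (a' ++ [p] ++ q :: b') = FreeGroup.reduce (a' ++ b') :=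
        FreeGroup.reduce.Step.eq hstep
      have ha' : List.Chain' Rel a' := ha.prefix ⟨[p], rfl⟩
      have hb' : List.Chain' Rel b' := hb.suffix (List.suffix_cons q b')
      have hlen' : a'.length ≤ n := by simp at hlen; omega
      obtain ⟨a₁, c, b₁, h1, h2, h3⟩ := ih a' b' hlen' ha' hb'
      refine ⟨a₁, c ++ [p], b₁, by rw [h1]; simp, ?_, by rw [hredeq, h3]⟩
      have hic : FreeGroup.invRev (c ++ [p]) = q :: FreeGroup.invRev c := by
        rw [invRev_append', hp]
        simp [FreeGroup.invRev]
      rw [hic, h2]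
      rfl
    · -- junction is reduced
      have hrel : Rel p q := by
        intro h1
        by_contra h2
        exact hpq ⟨h1, by cases hp2 : p.2 <;> cases hq2 : q.2 <;> simp_all⟩
      have hchain : List.Chain' Rel ((a' ++ [p]) ++ q :: b') := by
        rw [List.Chain', List.isChain_append]
        refine ⟨ha, hb, ?_⟩
        intro x hx y hy
        rw [List.getLast?_concat] at hx
        simp only [List.head?_cons, Option.mem_def, Option.some.injEq] at hx hy
        rw [← hx, ← hy]
        exact hrel
      exact ⟨a' ++ [p], [], q :: b', by simp, by simp [FreeGroup.invRev],
        by rw [reduce_eq_self_of_chain' hchain]⟩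

lemma reduce_append_left (A B : List (α × Bool)) :
    FreeGroup.reduce (A ++ B) = FreeGroup.reduce (FreeGroup.reduce A ++ B) :=
  FreeGroup.reduce.eq_of_red (FreeGroup.Red.append_append FreeGroup.reduce.red FreeGroup.Red.refl)

lemma suffix_of_suffix_length_le {l₁ l₂ l₃ : List α} (h1 : l₁ <:+ l₃) (h2 : l₂ <:+ l₃)
    (hl : l₁.length ≤ l₂.length) : l₁ <:+ l₂ := by
  rw [← List.reverse_prefix] at h1 h2 ⊢
  exact List.prefix_of_prefix_length_le h1 h2 (by simpa)

lemma invRev_ne_self {v : List (α × Bool)} (hv : v ≠ [])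
    (hcyc : List.Chain' Rel (v ++ v)) : FreeGroup.invRev v ≠ v := by
  intro h
  rcases List.eq_nil_or_concat v with rfl | ⟨v', a, hva⟩
  · exact hv rfl
  rw [List.concat_eq_append] at hva
  subst hva
  have h1 : (v' ++ [a]).getLast? = some a := List.getLast?_concat
  have h2 : (v' ++ [a]).head? = some (a.1, !a.2) := by
    conv_lhs => rw [← h]
    simp [FreeGroup.invRev]
  have h3 := (List.isChain_append.mp hcyc).2.2 a h1 _ h2
  have := h3 rfl
  simp at this


section Main
variable {Z ι : Type} [DecidableEq Z]

/-- The signed word corresponding to a signed generator. -/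
def xw (w : ι → List (Z × Bool)) (p : ι × Bool) : List (Z × Bool) :=
  if p.2 then w p.1 else FreeGroup.invRev (w p.1)

lemma wordInv_eq (L : List (Z × Bool)) : wordInv L = FreeGroup.invRev L := rfl

variable {w : ι → List (Z × Bool)}

lemma xw_cyc (hred : ∀ i, CyclicallyReducedW (w i)) (p : ι × Bool) :
    List.Chain' Rel (xw w p ++ xw w p) := by
  cases hp : p.2 <;> simp only [xw, hp, if_true, if_false, Bool.false_eq_true]
  · rw [← invRev_append']
    exact chain'_invRev (reduce_eq_self_iff.mp (hred p.1))
  · exact reduce_eq_self_iff.mp (hred p.1)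

lemma xw_red (hred : ∀ i, CyclicallyReducedW (w i)) (p : ι × Bool) :
    List.Chain' Rel (xw w p) :=
  (xw_cyc hred p).prefix (List.prefix_append _ _)

lemma xw_len (p : ι × Bool) : (xw w p).length = (w p.1).length := by
  cases hp : p.2 <;> simp [xw, hp]

lemma xw_ne (hne : ∀ i, w i ≠ []) (p : ι × Bool) : xw w p ≠ [] := by
  intro h
  apply hne p.1
  have := congrArg List.length h
  rw [xw_len] at this
  exact List.eq_nil_of_length_eq_zero this

lemma piece (hred : ∀ i, CyclicallyReducedW (w i)) (hne : ∀ i, w i ≠ []) (hC : FamC12 w)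
    {p q : ι × Bool} (hpq : Rel p q) {c : List (Z × Bool)}
    (hc1 : c <:+ xw w p) (hc2 : FreeGroup.invRev c <+: xw w q) :
    12 * c.length < min (xw w p).length (xw w q).length := by
  have hu : CyclicShiftOf (w p.1) (FreeGroup.invRev (xw w p)) := by
    refine ⟨0, ?_⟩
    cases hp : p.2
    · left
      simp [xw, hp, FreeGroup.invRev_invRev]
    · right
      rw [wordInv_eq, List.rotate_zero]
      simp [xw, hp]
  have hv : CyclicShiftOf (w q.1) (xw w q) := by
    refine ⟨0, ?_⟩
    cases hq : q.2
    · right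
      rw [wordInv_eq, List.rotate_zero]
      simp [xw, hq]
    · left
      simp [xw, hq]
  have hneuv : ¬(p.1 = q.1 ∧ FreeGroup.invRev (xw w p) = xw w q) := by
    rintro ⟨h1, h2⟩
    have h3 : p = q := Prod.ext h1 (hpq h1)
    rw [h3] at h2
    exact invRev_ne_self (xw_ne hne q) (xw_cyc hred q) h2
  have hpu : FreeGroup.invRev c <+: FreeGroup.invRev (xw w p) := by
    obtain ⟨d, hd⟩ := hc1
    exact ⟨FreeGroup.invRev d, by rw [← hd, invRev_append']⟩
  have h := hC p.1 q.1 _ _ hu hv hneuv (FreeGroup.invRev c) hpu hc2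
  simpa [FreeGroup.invRev_length] using h

lemma main_ind (hred : ∀ i, CyclicallyReducedW (w i)) (hne : ∀ i, w i ≠ []) (hC : FamC12 w) :
    ∀ (M : List (ι × Bool)) (p : ι × Bool), List.Chain' Rel (M ++ [p]) →
    ∃ r t, FreeGroup.reduce (((M ++ [p]).map (xw w)).flatten) = r ++ t ∧ t <:+ xw w p ∧
      12 * ((xw w p).length - t.length) < (xw w p).length := by
  intro M
  induction M using List.reverseRecOn with
  | nil =>
    intro p _
    refine ⟨[], xw w p, ?_, List.suffix_rfl, ?_⟩
    · simpa using reduce_eq_self_iff.mpr (xw_red hred p)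
    · have h : (xw w p).length ≠ 0 := by
        simpa [List.length_eq_zero_iff] using xw_ne hne p
      omega
  | append_singleton N p' IH =>
    intro p h
    have hNp' : List.Chain' Rel (N ++ [p']) := h.prefix (List.prefix_append _ _)
    have hrel : Rel p' p := by
      have hinf : [p', p] <:+: ((N ++ [p']) ++ [p]) := ⟨N, [], by simp⟩
      exact List.isChain_pair.mp (h.infix hinf)
    obtain ⟨r, t, hr, ht, hlt⟩ := IH p' hNp'
    have hA : (((N ++ [p']) ++ [p]).map (xw w)).flatten
        = (((N ++ [p']).map (xw w)).flatten) ++ xw w p := by simp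
    have hred2 : FreeGroup.reduce ((((N ++ [p']) ++ [p]).map (xw w)).flatten)
        = FreeGroup.reduce ((r ++ t) ++ xw w p) := by
      rw [hA, reduce_append_left, hr]
    have hchain_rt : List.Chain' Rel (r ++ t) := hr ▸ chain'_reduce _
    obtain ⟨a₁, c, b₁, h1, h2, h3⟩ :=
      cancel (r ++ t).length (r ++ t) (xw w p) le_rfl hchain_rt (xw_red hred p)
    have hcs : c <:+ r ++ t := ⟨a₁, h1.symm⟩
    have hts : t <:+ r ++ t := List.suffix_append r t
    have htlen : t.length ≤ (xw w p').length := ht.length_le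
    have hclen : c.length ≤ t.length := by
      by_contra hlen
      push_neg at hlen
      have htc : t <:+ c := suffix_of_suffix_length_le hts hcs (le_of_lt hlen)
      have hpref : FreeGroup.invRev t <+: xw w p := by
        have h4 : FreeGroup.invRev t <+: FreeGroup.invRev c := by
          obtain ⟨d, hd⟩ := htc
          exact ⟨FreeGroup.invRev d, by rw [← hd, invRev_append']⟩
        exact h4.trans ⟨b₁, h2.symm⟩
      have hp := piece hred hne hC hrel ht hpref
      have h6 := lt_of_lt_of_le hp (min_le_left _ _)
      omega
    have hct : c <:+ xw w p' := (suffix_of_suffix_length_le hcs hts hclen).trans ht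
    have hp := piece hred hne hC hrel hct ⟨b₁, h2.symm⟩
    have h6 := lt_of_lt_of_le hp (min_le_right _ _)
    refine ⟨a₁, b₁, by rw [hred2, h3], ⟨FreeGroup.invRev c, h2.symm⟩, ?_⟩
    have h7 : (xw w p).length = c.length + b₁.length := by
      have := congrArg List.length h2
      simpa [FreeGroup.invRev_length] using this
    omega

lemma lift_eq (w : ι → List (Z × Bool)) (L : List (ι × Bool)) :
    (FreeGroup.lift fun i => FreeGroup.mk (w i)) (FreeGroup.mk L)
      = FreeGroup.mk ((L.map (xw w)).flatten) := by
  induction L with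
  | nil =>
    rw [show (FreeGroup.mk ([] : List (ι × Bool))) = 1 from FreeGroup.one_eq_mk.symm]
    simp
    rw [FreeGroup.one_eq_mk]
  | cons q L ih =>
    have hsplit : FreeGroup.mk (q :: L) = FreeGroup.mk [q] * FreeGroup.mk L := by
      rw [FreeGroup.mul_mk]; rfl
    rw [hsplit, _root_.map_mul, ih]
    have hq : (FreeGroup.lift fun i => FreeGroup.mk (w i)) (FreeGroup.mk [q])
        = FreeGroup.mk (xw w q) := by
      rcases q with ⟨i, e⟩
      cases e
      · have hofinv : (FreeGroup.mk [(i, false)] : FreeGroup ι) = (FreeGroup.of i)⁻¹ := by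
          rw [FreeGroup.of, FreeGroup.inv_mk]
          simp [FreeGroup.invRev]
        rw [hofinv, _root_.map_inv, FreeGroup.lift_apply_of, FreeGroup.inv_mk]
        simp [xw]
      · rw [show (FreeGroup.mk [(i, true)] : FreeGroup ι) = FreeGroup.of i from rfl,
          FreeGroup.lift_apply_of]
        simp [xw]
    rw [hq, FreeGroup.mul_mk]
    simp




/-- If `{w_i : i ∈ I}` is a family of (nonempty, cyclically reduced) words over
the alphabet `Z` satisfying the small cancellation condition `C'(1/12)`, then
the subgroup of the free group `F(Z)` generated by the `w_i` is free, freely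
generated by the `w_i`: the induced homomorphism from the free group on `I`
is injective. -/
theorem free_basis_of_small_cancellation {Z ι : Type} [DecidableEq Z]
    (w : ι → List (Z × Bool))
    (hred : ∀ i, CyclicallyReducedW (w i)) (hne : ∀ i, w i ≠ [])
    (hC : FamC12 w) :
    Function.Injective
      (FreeGroup.lift (fun i => FreeGroup.mk (w i)) : FreeGroup ι →* FreeGroup Z) := by
  classical
  rw [injective_iff_map_eq_one]
  intro g hg
  by_contra hgne
  have hL : g.toWord ≠ [] := fun e => hgne (FreeGroup.toWord_eq_nil_iff.mp e)
  have hLred : List.Chain' Rel g.toWord := reduce_eq_self_iff.mp (FreeGroup.reduce_toWord g)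
  rcases List.eq_nil_or_concat g.toWord with he | ⟨M, p, he⟩
  · exact hL he
  rw [List.concat_eq_append] at he
  obtain ⟨r, t, hrt, hts, hlt⟩ := main_ind hred hne hC M p (he ▸ hLred)
  have hlift : (FreeGroup.lift fun i => FreeGroup.mk (w i)) g
      = FreeGroup.mk ((g.toWord.map (xw w)).flatten) := by
    conv_lhs => rw [← FreeGroup.mk_toWord (x := g)]
    exact lift_eq w g.toWord
  rw [hlift] at hg
  have hnil : FreeGroup.reduce ((g.toWord.map (xw w)).flatten) = [] := by
    have := congrArg FreeGroup.toWord hg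
    rwa [FreeGroup.toWord_mk, FreeGroup.toWord_one] at this
  rw [he, hrt] at hnil
  rcases List.append_eq_nil_iff.mp hnil with ⟨-, ht0⟩
  rw [ht0] at hlt
  have hn : (xw w p).length ≠ 0 := by
    simpa [List.length_eq_zero_iff] using xw_ne hne p
  simp at hlt
  omega


end Main
end Paper
end

section
/- Let P = ⟨M₁, M₂ ∣ L₁, L₂, xᵢ yᵢ⁻¹ (i ∈ I)⟩ with xᵢ words over M₁ and yᵢ words over M₂ be the standard presentation of an amalgamated product. If ⟨M₁ ∣ L₁⟩ and ⟨M₂ ∣ L₂⟩ are combinatorially aspherical presentations and {xᵢ : i ∈ I} and {yᵢ : i ∈ I} each freely generate free subgroups of the respective groups, then P is combinatorially aspherical. -/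
namespace Paper

/-- The canonical projection from the free group onto a presented group. -/
def pgMk {α : Type} (rels : Set (FreeGroup α)) : FreeGroup α →* PresentedGroup rels :=
  QuotientGroup.mk' (Subgroup.normalClosure rels)

/-- The map sending a formal conjugate `(f, r)` of a relator to the element
`f r f⁻¹` of the free group.  Elements of its kernel are the identities among
the relations of the presentation. -/
def idMap {α : Type} (R : Set (FreeGroup α)) : FreeGroup (FreeGroup α × R) →* FreeGroup α :=
  FreeGroup.lift fun p => p.1 * (p.2 : FreeGroup α) * p.1⁻¹

/-- The Peiffer elements among formal products of conjugates of relators. -/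
def PeifferSet {α : Type} (R : Set (FreeGroup α)) : Set (FreeGroup (FreeGroup α × R)) :=
  { x | ∃ (f g : FreeGroup α) (r s : R),
      x = FreeGroup.of (f, r) * FreeGroup.of (g, s) * (FreeGroup.of (f, r))⁻¹ *
          (FreeGroup.of (f * (r : FreeGroup α) * f⁻¹ * g, s))⁻¹ }

/-- A presentation is combinatorially (Peiffer) aspherical iff every spherical
diagram over it is combinatorially homotopic to the empty diagram; algebraically,
every identity among the relations is a consequence of the Peiffer elements. -/
def CombAspherical {α : Type} (R : Set (FreeGroup α)) : Prop :=
  MonoidHom.ker (idMap R) = Subgroup.normalClosure (PeifferSet R)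

end Paper
namespace Paper

variable {α : Type} {R : Set (FreeGroup α)}

/-- Action of the free group on formal conjugates. -/
def actMap (R : Set (FreeGroup α)) (g : FreeGroup α) :
    FreeGroup (FreeGroup α × R) →* FreeGroup (FreeGroup α × R) :=
  FreeGroup.map (fun p => (g * p.1, p.2))

@[simp] lemma actMap_of (g : FreeGroup α) (p : FreeGroup α × R) :
    actMap R g (FreeGroup.of p) = FreeGroup.of (g * p.1, p.2) := by
  simp [actMap]

@[simp] lemma idMap_of (p : FreeGroup α × R) :
    idMap R (FreeGroup.of p) = p.1 * (p.2 : FreeGroup α) * p.1⁻¹ := by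
  simp [idMap]

lemma actMap_one : actMap R 1 = MonoidHom.id _ := by
  apply FreeGroup.ext_hom; intro p; simp

lemma actMap_mul (g h : FreeGroup α) (w : FreeGroup (FreeGroup α × R)) :
    actMap R g (actMap R h w) = actMap R (g * h) w := by
  have : (actMap R g).comp (actMap R h) = actMap R (g * h) := by
    apply FreeGroup.ext_hom; intro p; simp [mul_assoc]
  simpa using DFunLike.congr_fun this w

lemma idMap_actMap (g : FreeGroup α) (w : FreeGroup (FreeGroup α × R)) :
    idMap R (actMap R g w) = g * idMap R w * g⁻¹ := by
  have : (idMap R).comp (actMap R g) =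
      ((MulAut.conj g).toMonoidHom.comp (idMap R)) := by
    apply FreeGroup.ext_hom; intro p
    simp [mul_assoc]
  simpa using DFunLike.congr_fun this w

local notation "NP" => Subgroup.normalClosure (PeifferSet R)

lemma pure_eq_of (p : FreeGroup α × R) : (pure p : FreeGroup (FreeGroup α × R)) = FreeGroup.of p := rfl

lemma peiffer_conj_mem : ∀ (u v : FreeGroup (FreeGroup α × R)),
    u * v * u⁻¹ * (actMap R (idMap R u) v)⁻¹ ∈ NP := by
  have inner : ∀ c : FreeGroup (FreeGroup α × R),
      (∀ p : FreeGroup α × R, c * FreeGroup.of p * c⁻¹ *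
        (actMap R (idMap R c) (FreeGroup.of p))⁻¹ ∈ NP) →
      ∀ v, c * v * c⁻¹ * (actMap R (idMap R c) v)⁻¹ ∈ NP := by
    intro c hbase v
    induction v using FreeGroup.induction_on with
    | C1 => simpa using (Subgroup.one_mem _)
    | of p => exact hbase p
    | inv_of p hv =>
      have h1 := (Subgroup.normalClosure (PeifferSet R)).inv_mem hv
      have h2 := (Subgroup.normalClosure_normal (s := PeifferSet R)).conj_mem _ h1
        ((actMap R (idMap R c) (FreeGroup.of p))⁻¹)
      have h3 : ((actMap R (idMap R c) (FreeGroup.of p))⁻¹ *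
          (c * FreeGroup.of p * c⁻¹ * (actMap R (idMap R c) (FreeGroup.of p))⁻¹)⁻¹ *
          ((actMap R (idMap R c) (FreeGroup.of p))⁻¹)⁻¹) =
          c * (FreeGroup.of p)⁻¹ * c⁻¹ * (actMap R (idMap R c) (FreeGroup.of p)⁻¹)⁻¹ := by
        rw [map_inv]; group
      rw [h3] at h2; exact h2
    | mul v w hv hw =>
      have h2 := (Subgroup.normalClosure_normal (s := PeifferSet R)).conj_mem _ hw
        (c * v * c⁻¹)
      have h4 := Subgroup.mul_mem _ h2 hv
      have h5 : (c * v * c⁻¹) * (c * w * c⁻¹ * (actMap R (idMap R c) w)⁻¹) * (c * v * c⁻¹)⁻¹ *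
          (c * v * c⁻¹ * (actMap R (idMap R c) v)⁻¹) =
          c * (v * w) * c⁻¹ * (actMap R (idMap R c) (v * w))⁻¹ := by
        rw [map_mul]; group
      rw [h5] at h4; exact h4
  intro u
  induction u using FreeGroup.induction_on with
  | C1 =>
    intro v
    simpa [actMap_one] using (Subgroup.one_mem _)
  | of p =>
    refine inner _ ?_
    intro q
    refine Subgroup.subset_normalClosure ?_
    refine ⟨p.1, q.1, p.2, q.2, ?_⟩
    simp [mul_assoc]
  | inv_of p hu =>
    refine inner _ ?_
    intro q
    have hv' := hu (actMap R (idMap R ((FreeGroup.of p)⁻¹)) (FreeGroup.of q))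
    rw [actMap_mul] at hv'
    rw [map_inv, mul_inv_cancel, actMap_one] at hv'
    simp only [MonoidHom.id_apply] at hv'
    have h1 := (Subgroup.normalClosure (PeifferSet R)).inv_mem hv'
    have h2 := (Subgroup.normalClosure_normal (s := PeifferSet R)).conj_mem _ h1 ((FreeGroup.of p)⁻¹)
    have h3 : ((FreeGroup.of p)⁻¹ *
        (FreeGroup.of p * actMap R ((idMap R (FreeGroup.of p))⁻¹) (FreeGroup.of q) *
          (FreeGroup.of p)⁻¹ * (FreeGroup.of q)⁻¹)⁻¹ * ((FreeGroup.of p)⁻¹)⁻¹) =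
        (FreeGroup.of p)⁻¹ * FreeGroup.of q * ((FreeGroup.of p)⁻¹)⁻¹ *
          (actMap R ((idMap R (FreeGroup.of p))⁻¹) (FreeGroup.of q))⁻¹ := by
      group
    rw [h3] at h2
    rw [map_inv]
    exact h2
  | mul a b ha hb =>
    refine inner _ ?_
    intro q
    have h1 := ha (actMap R (idMap R b) (FreeGroup.of q))
    have h2 := hb (FreeGroup.of q)
    rw [actMap_mul] at h1
    have h3 := (Subgroup.normalClosure_normal (s := PeifferSet R)).conj_mem _ h2 a
    have h4 := Subgroup.mul_mem _ h3 h1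
    have h5 : a * (b * FreeGroup.of q * b⁻¹ * (actMap R (idMap R b) (FreeGroup.of q))⁻¹) * a⁻¹ *
        (a * actMap R (idMap R b) (FreeGroup.of q) * a⁻¹ *
          (actMap R (idMap R a * idMap R b) (FreeGroup.of q))⁻¹) =
        (a * b) * FreeGroup.of q * (a * b)⁻¹ *
          (actMap R (idMap R (a * b)) (FreeGroup.of q))⁻¹ := by
      rw [map_mul]; group
    rw [h5] at h4
    exact h4


lemma peiffer_le_ker : Subgroup.normalClosure (PeifferSet R) ≤ MonoidHom.ker (idMap R) := by
  refine Subgroup.normalClosure_le_normal ?_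
  rintro x ⟨f, g, r, s, rfl⟩
  have : idMap R (FreeGroup.of (f, r) * FreeGroup.of (g, s) * (FreeGroup.of (f, r))⁻¹ *
      (FreeGroup.of (f * (r : FreeGroup α) * f⁻¹ * g, s))⁻¹) = 1 := by
    simp only [map_mul, map_inv, idMap_of]
    group
  exact this

lemma idMap_range_normal : ((idMap R).range).Normal := by
  constructor
  intro x hx g
  obtain ⟨w, rfl⟩ := hx
  exact ⟨actMap R g w, by rw [idMap_actMap]⟩

lemma idMap_range : (idMap R).range = Subgroup.normalClosure R := by
  haveI := idMap_range_normal (R := R)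
  apply le_antisymm
  · rintro x ⟨w, rfl⟩
    have : ∀ w : FreeGroup (FreeGroup α × R), idMap R w ∈ Subgroup.normalClosure R := by
      intro w
      induction w using FreeGroup.induction_on with
      | C1 => simpa using Subgroup.one_mem _
      | of p =>
        rw [idMap_of]
        exact (Subgroup.normalClosure_normal).conj_mem _
          (Subgroup.subset_normalClosure p.2.2) p.1
      | inv_of p h => rw [map_inv]; exact Subgroup.inv_mem _ h
      | mul a b ha hb => rw [map_mul]; exact Subgroup.mul_mem _ ha hb
    exact this w
  · refine Subgroup.normalClosure_le_normal ?_
    rintro r hr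
    exact ⟨FreeGroup.of (1, ⟨r, hr⟩), by simp⟩

variable (R)

/-- The free crossed module quotient. -/
def CQ : Type := FreeGroup (FreeGroup α × R) ⧸ Subgroup.normalClosure (PeifferSet R)

instance : Group (CQ R) := QuotientGroup.Quotient.group _

def cq : FreeGroup (FreeGroup α × R) →* CQ R := QuotientGroup.mk' _

lemma cq_surjective : Function.Surjective (cq R) := QuotientGroup.mk'_surjective _

/-- The subgroup generated by the relators. -/
def Nsub : Subgroup (FreeGroup α) := (idMap R).range

/-- The boundary map of the crossed module. -/
def bnd : CQ R →* Nsub R :=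
  QuotientGroup.lift _ ((idMap R).rangeRestrict)
    (by intro w hw; exact Subtype.ext (peiffer_le_ker hw))

@[simp] lemma bnd_cq (w : FreeGroup (FreeGroup α × R)) :
    bnd R (cq R w) = (idMap R).rangeRestrict w := rfl

lemma bnd_surjective : Function.Surjective (bnd R) := by
  intro n
  obtain ⟨w, hw⟩ := (idMap R).rangeRestrict_surjective n
  exact ⟨cq R w, hw⟩

lemma central_of_bnd_one {z : CQ R} (hz : bnd R z = 1) (d : CQ R) : z * d = d * z := by
  obtain ⟨w, rfl⟩ := cq_surjective R z
  obtain ⟨v, rfl⟩ := cq_surjective R d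
  have h1 : idMap R w = 1 := by
    have := congrArg (Subgroup.subtype _) hz
    simpa using this
  have h2 := peiffer_conj_mem w v
  rw [h1, actMap_one] at h2
  simp only [MonoidHom.id_apply] at h2
  rw [← map_mul, ← map_mul]
  have : (w * v)⁻¹ * (v * w) ∈ Subgroup.normalClosure (PeifferSet R) := by
    have h3 := (Subgroup.normalClosure (PeifferSet R)).inv_mem h2
    have h4 := (Subgroup.normalClosure_normal (s := PeifferSet R)).conj_mem _ h3 (v * w)⁻¹
    have h5 : ((v * w)⁻¹ * (w * v * w⁻¹ * v⁻¹)⁻¹ * ((v * w)⁻¹)⁻¹) = (w * v)⁻¹ * (v * w) := by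
      group
    rwa [h5] at h4
  exact (QuotientGroup.eq ).mpr this

noncomputable def sig : Nsub R →* CQ R :=
  IsFreeGroup.lift (fun b => Function.surjInv (bnd_surjective R) (IsFreeGroup.of b))

lemma bnd_sig (n : Nsub R) : bnd R (sig R n) = n := by
  have : (bnd R).comp (sig R) = MonoidHom.id _ := by
    apply IsFreeGroup.ext_hom
    intro b
    simp only [MonoidHom.comp_apply, MonoidHom.id_apply, sig, IsFreeGroup.lift_of]
    exact Function.surjInv_eq (bnd_surjective R) _
  simpa using DFunLike.congr_fun this n

noncomputable def psiH : CQ R →* CQ R where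
  toFun c := c * (sig R (bnd R c))⁻¹
  map_one' := by simp
  map_mul' c d := by
    have hker : bnd R (d * (sig R (bnd R d))⁻¹) = 1 := by
      simp [bnd_sig]
    have hc := central_of_bnd_one R hker ((sig R (bnd R c))⁻¹)
    simp only [map_mul, mul_inv_rev]
    calc c * d * ((sig R (bnd R d))⁻¹ * (sig R (bnd R c))⁻¹)
        = c * ((d * (sig R (bnd R d))⁻¹) * (sig R (bnd R c))⁻¹) := by group
      _ = c * ((sig R (bnd R c))⁻¹ * (d * (sig R (bnd R d))⁻¹)) := by rw [← hc]
      _ = c * (sig R (bnd R c))⁻¹ * (d * (sig R (bnd R d))⁻¹) := by group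

lemma psiH_central (c : CQ R) : bnd R (psiH R c) = 1 := by
  simp [psiH, bnd_sig]

lemma psiH_of_commutator {k : CQ R} (hk : k ∈ commutator (CQ R)) : psiH R k = 1 := by
  have hle : commutator (CQ R) ≤ (psiH R).ker := by
    rw [commutator, Subgroup.commutator_le]
    intro a _ b _
    rw [MonoidHom.mem_ker, map_commutatorElement, commutatorElement_eq_one_iff_commute]
    exact central_of_bnd_one R (psiH_central R a) (psiH R b)
  exact hle hk

lemma eq_one_of_commutator_ker {k : CQ R} (hk : k ∈ commutator (CQ R))
    (hb : bnd R k = 1) : k = 1 := by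
  have h1 := psiH_of_commutator R hk
  have h2 : psiH R k = k := by simp [psiH, hb]
  rw [h2] at h1; exact h1


lemma cq_eq_one_iff (w : FreeGroup (FreeGroup α × R)) :
    cq R w = 1 ↔ w ∈ Subgroup.normalClosure (PeifferSet R) :=
  QuotientGroup.eq_one_iff w

variable {R}

noncomputable def phi0 (f : FreeGroup α) (r : R) : Abelianization (CQ R) :=
  Abelianization.of (cq R (FreeGroup.of (f, r)))

lemma phi0_mul_normal (f n : FreeGroup α) (hn : n ∈ Subgroup.normalClosure R) (r : R) :
    phi0 (f * n) r = phi0 f r := by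
  rw [← idMap_range] at hn
  obtain ⟨u, hu⟩ := hn
  have h2 := peiffer_conj_mem (actMap R f u) (FreeGroup.of (f, r))
  rw [idMap_actMap, hu, actMap_of] at h2
  have hfn : (f * n * f⁻¹ * f : FreeGroup α) = f * n := by group
  rw [hfn] at h2
  -- h2 : u' * of (f,r) * u'⁻¹ * (of (f*n, r))⁻¹ ∈ NP
  have h3 : cq R (actMap R f u * FreeGroup.of (f, r) * (actMap R f u)⁻¹ *
      (FreeGroup.of (f * n, r))⁻¹) = 1 := (cq_eq_one_iff R _).mpr h2
  simp only [map_mul, map_inv] at h3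
  have h4 : cq R (actMap R f u) * cq R (FreeGroup.of (f, r)) * (cq R (actMap R f u))⁻¹ =
      cq R (FreeGroup.of (f * n, r)) := mul_inv_eq_one.mp h3
  unfold phi0
  rw [← h4, map_mul, map_mul, map_inv]
  rw [mul_comm (Abelianization.of (cq R (actMap R f u)))]
  rw [mul_inv_cancel_right]

noncomputable def phi0bar (γ : PresentedGroup R) (r : R) : Abelianization (CQ R) :=
  phi0 γ.out r

lemma phi0bar_mk (f : FreeGroup α) (r : R) : phi0bar (pgMk R f) r = phi0 f r := by
  obtain ⟨h, hh⟩ := QuotientGroup.mk_out_eq_mul (Subgroup.normalClosure R) f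
  unfold phi0bar pgMk
  show phi0 (QuotientGroup.mk f : FreeGroup α ⧸ _).out r = phi0 f r
  rw [hh]
  exact phi0_mul_normal f h h.2 r

/-- Fox-coordinates homomorphism. -/
noncomputable def chiA (R : Set (FreeGroup α)) :
    FreeGroup (FreeGroup α × R) →* Multiplicative ((PresentedGroup R × R) →₀ ℤ) :=
  FreeGroup.lift fun p => Multiplicative.ofAdd (Finsupp.single (pgMk R p.1, p.2) 1)

noncomputable def muAdd (R : Set (FreeGroup α)) :
    ((PresentedGroup R × R) →₀ ℤ) →+ Additive (Abelianization (CQ R)) :=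
  Finsupp.liftAddHom fun pr => zmultiplesHom _ (Additive.ofMul (phi0bar pr.1 pr.2))

noncomputable def muA (R : Set (FreeGroup α)) :
    Multiplicative ((PresentedGroup R × R) →₀ ℤ) →* Abelianization (CQ R) where
  toFun a := ((muAdd R) a.toAdd).toMul
  map_one' := by simp
  map_mul' a b := by
    show ((muAdd R) ((a.toAdd) + (b.toAdd))).toMul = _
    rw [map_add]
    rfl

lemma muA_chiA (w : FreeGroup (FreeGroup α × R)) :
    muA R (chiA R w) = Abelianization.of (cq R w) := by
  have : (muA R).comp (chiA R) = (Abelianization.of).comp (cq R) := by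
    apply FreeGroup.ext_hom
    intro p
    simp only [MonoidHom.comp_apply]
    have h1 : chiA R (FreeGroup.of p) =
        Multiplicative.ofAdd (Finsupp.single (pgMk R p.1, p.2) 1) := by
      simp [chiA]
    rw [h1]
    show ((muAdd R) ((Multiplicative.ofAdd (Finsupp.single (pgMk R p.1, p.2) (1:ℤ))).toAdd)).toMul = _
    rw [toAdd_ofAdd]
    unfold muAdd
    rw [Finsupp.liftAddHom_apply_single]
    show (((1:ℤ) • (Additive.ofMul (phi0bar (pgMk R p.1) p.2)))).toMul = _
    rw [one_zsmul, toMul_ofMul, phi0bar_mk]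
    rfl
  exact DFunLike.congr_fun this w

/-- Main lemma of Part A : an identity with vanishing Fox coordinates is a
Peiffer consequence. -/
theorem mem_peiffer_of_chi (w : FreeGroup (FreeGroup α × R))
    (h1 : idMap R w = 1) (h2 : chiA R w = 1) :
    w ∈ Subgroup.normalClosure (PeifferSet R) := by
  rw [← cq_eq_one_iff R]
  have hb : bnd R (cq R w) = 1 := by
    rw [bnd_cq]
    ext
    simpa using h1
  have hab : Abelianization.of (cq R w) = 1 := by
    rw [← muA_chiA, h2, map_one]
  have hcomm : cq R w ∈ commutator (CQ R) := (QuotientGroup.eq_one_iff _).mp hab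
  exact eq_one_of_commutator_ker R hcomm hb

/-- If `R` is combinatorially aspherical, every hom killing the Peiffer set
kills all identities. -/
lemma ker_le_of_CA {H : Type} [Group H] (hCA : CombAspherical R)
    (Ψ : FreeGroup (FreeGroup α × R) →* H) (hgen : ∀ x ∈ PeifferSet R, Ψ x = 1) :
    MonoidHom.ker (idMap R) ≤ MonoidHom.ker Ψ := by
  rw [hCA]
  exact Subgroup.normalClosure_le_normal hgen


section Amalgam

open Monoid

variable {M₁ M₂ I : Type}
variable (L₁ : Set (FreeGroup M₁)) (L₂ : Set (FreeGroup M₂))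
variable (x : I → FreeGroup M₁) (y : I → FreeGroup M₂)

/-- Family of the two presented groups, indexed by `Bool`. -/
abbrev Gfam : Bool → Type := fun b =>
  Bool.rec (PresentedGroup L₂) (PresentedGroup L₁) b

instance (b : Bool) : Group (Gfam L₁ L₂ b) := by
  cases b
  · exact inferInstanceAs (Group (PresentedGroup L₂))
  · exact inferInstanceAs (Group (PresentedGroup L₁))

/-- The two maps from the free group on `I`. -/
abbrev phifam : ∀ b : Bool, FreeGroup I →* Gfam L₁ L₂ b := fun b =>
  Bool.rec (FreeGroup.lift fun i => pgMk L₂ (y i))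
    (FreeGroup.lift fun i => pgMk L₁ (x i)) b

variable {L₁ L₂ x y}

section Defs

def iota1 : FreeGroup M₁ →* FreeGroup (M₁ ⊕ M₂) := FreeGroup.map Sum.inl
def iota2 : FreeGroup M₂ →* FreeGroup (M₁ ⊕ M₂) := FreeGroup.map Sum.inr

variable (L₁ L₂ x y)

def Ramal : Set (FreeGroup (M₁ ⊕ M₂)) :=
  (iota1 '' L₁) ∪ (iota2 '' L₂) ∪ Set.range fun i => iota1 (x i) * (iota2 (y i))⁻¹

lemma mem_Ramal_left {l : FreeGroup M₁} (hl : l ∈ L₁) : iota1 l ∈ Ramal L₁ L₂ x y :=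
  Or.inl (Or.inl ⟨l, hl, rfl⟩)

lemma mem_Ramal_right {l : FreeGroup M₂} (hl : l ∈ L₂) : iota2 l ∈ Ramal L₁ L₂ x y :=
  Or.inl (Or.inr ⟨l, hl, rfl⟩)

lemma mem_Ramal_rel (i : I) : iota1 (x i) * (iota2 (y i))⁻¹ ∈ Ramal L₁ L₂ x y :=
  Or.inr ⟨i, rfl⟩

/-- The presented group of the amalgam presentation. -/
abbrev PGam := PresentedGroup (Ramal L₁ L₂ x y)

def kappa1 : PresentedGroup L₁ →* PGam L₁ L₂ x y :=
  PresentedGroup.toGroup (f := fun m => PresentedGroup.of (Sum.inl m))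
    (by
      intro r hr
      have hcomp : (FreeGroup.lift (fun m => (PresentedGroup.of (Sum.inl m) :
          PGam L₁ L₂ x y))) = (pgMk (Ramal L₁ L₂ x y)).comp iota1 := by
        apply FreeGroup.ext_hom; intro m; rfl
      rw [hcomp]
      show pgMk (Ramal L₁ L₂ x y) (iota1 r) = 1
      exact (QuotientGroup.eq_one_iff _).mpr
        (Subgroup.subset_normalClosure (mem_Ramal_left L₁ L₂ x y hr)))

def kappa2 : PresentedGroup L₂ →* PGam L₁ L₂ x y :=
  PresentedGroup.toGroup (f := fun m => PresentedGroup.of (Sum.inr m))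
    (by
      intro r hr
      have hcomp : (FreeGroup.lift (fun m => (PresentedGroup.of (Sum.inr m) :
          PGam L₁ L₂ x y))) = (pgMk (Ramal L₁ L₂ x y)).comp iota2 := by
        apply FreeGroup.ext_hom; intro m; rfl
      rw [hcomp]
      show pgMk (Ramal L₁ L₂ x y) (iota2 r) = 1
      exact (QuotientGroup.eq_one_iff _).mpr
        (Subgroup.subset_normalClosure (mem_Ramal_right L₁ L₂ x y hr)))

@[simp] lemma kappa1_pgMk (w : FreeGroup M₁) :
    kappa1 L₁ L₂ x y (pgMk L₁ w) = pgMk (Ramal L₁ L₂ x y) (iota1 w) := by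
  have : (kappa1 L₁ L₂ x y).comp (pgMk L₁) = (pgMk (Ramal L₁ L₂ x y)).comp iota1 := by
    apply FreeGroup.ext_hom; intro m; rfl
  exact DFunLike.congr_fun this w

@[simp] lemma kappa2_pgMk (w : FreeGroup M₂) :
    kappa2 L₁ L₂ x y (pgMk L₂ w) = pgMk (Ramal L₁ L₂ x y) (iota2 w) := by
  have : (kappa2 L₁ L₂ x y).comp (pgMk L₂) = (pgMk (Ramal L₁ L₂ x y)).comp iota2 := by
    apply FreeGroup.ext_hom; intro m; rfl
  exact DFunLike.congr_fun this w

lemma pgam_rel (i : I) :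
    pgMk (Ramal L₁ L₂ x y) (iota1 (x i)) = pgMk (Ramal L₁ L₂ x y) (iota2 (y i)) := by
  have h1 : pgMk (Ramal L₁ L₂ x y) (iota1 (x i) * (iota2 (y i))⁻¹) = 1 :=
    (QuotientGroup.eq_one_iff _).mpr
      (Subgroup.subset_normalClosure (mem_Ramal_rel L₁ L₂ x y i))
  rw [map_mul, map_inv] at h1
  exact mul_inv_eq_one.mp h1

/-- The family of maps into the pushout. -/
abbrev kappafam : ∀ b : Bool, Gfam L₁ L₂ b →* PGam L₁ L₂ x y := fun b =>
  Bool.rec (kappa2 L₁ L₂ x y) (kappa1 L₁ L₂ x y) b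

lemma kappafam_comp_phifam (b : Bool) :
    (kappafam L₁ L₂ x y b).comp (phifam L₁ L₂ x y b) =
      (kappa1 L₁ L₂ x y).comp (phifam L₁ L₂ x y true) := by
  cases b
  · apply FreeGroup.ext_hom
    intro i
    show kappa2 L₁ L₂ x y (FreeGroup.lift (fun i => pgMk L₂ (y i)) (FreeGroup.of i)) =
      kappa1 L₁ L₂ x y (FreeGroup.lift (fun i => pgMk L₁ (x i)) (FreeGroup.of i))
    rw [FreeGroup.lift_apply_of, FreeGroup.lift_apply_of, kappa1_pgMk, kappa2_pgMk]
    exact (pgam_rel L₁ L₂ x y i).symm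
  · rfl

/-- The map from the amalgam presented group to the pushout. -/
def alphaHom : PGam L₁ L₂ x y →* PushoutI (phifam L₁ L₂ x y) :=
  PresentedGroup.toGroup
    (f := Sum.elim (fun m => PushoutI.of (φ := phifam L₁ L₂ x y) true (PresentedGroup.of m))
      (fun m => PushoutI.of (φ := phifam L₁ L₂ x y) false (PresentedGroup.of m)))
    (by
      have hcomp1 : (FreeGroup.lift (Sum.elim
          (fun m => PushoutI.of (φ := phifam L₁ L₂ x y) true (PresentedGroup.of m))
          (fun m => PushoutI.of (φ := phifam L₁ L₂ x y) false (PresentedGroup.of m)))).comp iota1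
          = (PushoutI.of (φ := phifam L₁ L₂ x y) true).comp (pgMk L₁) := by
        apply FreeGroup.ext_hom; intro m
        simp [iota1, pgMk]
        rfl
      have hcomp2 : (FreeGroup.lift (Sum.elim
          (fun m => PushoutI.of (φ := phifam L₁ L₂ x y) true (PresentedGroup.of m))
          (fun m => PushoutI.of (φ := phifam L₁ L₂ x y) false (PresentedGroup.of m)))).comp iota2
          = (PushoutI.of (φ := phifam L₁ L₂ x y) false).comp (pgMk L₂) := by
        apply FreeGroup.ext_hom; intro m
        simp [iota2, pgMk]
        rfl
      rintro r ((⟨l, hl, rfl⟩ | ⟨l, hl, rfl⟩) | ⟨i, rfl⟩)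
      · have h := DFunLike.congr_fun hcomp1 l
        simp only [MonoidHom.comp_apply] at h
        have hone : pgMk L₁ l = 1 :=
          (QuotientGroup.eq_one_iff l).mpr (Subgroup.subset_normalClosure hl)
        rw [h, hone, map_one]
      · have h := DFunLike.congr_fun hcomp2 l
        simp only [MonoidHom.comp_apply] at h
        have hone : pgMk L₂ l = 1 :=
          (QuotientGroup.eq_one_iff l).mpr (Subgroup.subset_normalClosure hl)
        rw [h, hone, map_one]
      · have h1 := DFunLike.congr_fun hcomp1 (x i)
        have h2 := DFunLike.congr_fun hcomp2 (y i)
        simp only [MonoidHom.comp_apply] at h1 h2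
        rw [map_mul, map_inv, h1, h2]
        have e1 : (pgMk L₁ (x i)) = phifam L₁ L₂ x y true (FreeGroup.of i) := by
          simp [phifam]
        have e2 : (pgMk L₂ (y i)) = phifam L₁ L₂ x y false (FreeGroup.of i) := by
          simp [phifam]
        rw [e1, e2, PushoutI.of_apply_eq_base, PushoutI.of_apply_eq_base, mul_inv_cancel])

def betaHom : PushoutI (phifam L₁ L₂ x y) →* PGam L₁ L₂ x y :=
  PushoutI.lift (kappafam L₁ L₂ x y) ((kappa1 L₁ L₂ x y).comp (phifam L₁ L₂ x y true))
    (kappafam_comp_phifam L₁ L₂ x y)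

lemma alpha_kappa1 :
    (alphaHom L₁ L₂ x y).comp (kappa1 L₁ L₂ x y) =
      PushoutI.of (φ := phifam L₁ L₂ x y) true := by
  apply PresentedGroup.ext
  intro m
  show alphaHom L₁ L₂ x y (kappa1 L₁ L₂ x y (PresentedGroup.of m)) = _
  unfold kappa1
  rw [PresentedGroup.toGroup.of]
  unfold alphaHom
  rw [PresentedGroup.toGroup.of]
  rfl

lemma alpha_kappa2 :
    (alphaHom L₁ L₂ x y).comp (kappa2 L₁ L₂ x y) =
      PushoutI.of (φ := phifam L₁ L₂ x y) false := by
  apply PresentedGroup.ext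
  intro m
  show alphaHom L₁ L₂ x y (kappa2 L₁ L₂ x y (PresentedGroup.of m)) = _
  unfold kappa2
  rw [PresentedGroup.toGroup.of]
  unfold alphaHom
  rw [PresentedGroup.toGroup.of]
  rfl

/-- The canonical map of the free group on `I` into the amalgam group. -/
def emI : FreeGroup I →* PGam L₁ L₂ x y :=
  (kappa1 L₁ L₂ x y).comp (phifam L₁ L₂ x y true)

lemma alpha_emI :
    (alphaHom L₁ L₂ x y).comp (emI L₁ L₂ x y) =
      PushoutI.base (phifam L₁ L₂ x y) := by
  apply FreeGroup.ext_hom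
  intro i
  show alphaHom L₁ L₂ x y (kappa1 L₁ L₂ x y (phifam L₁ L₂ x y true (FreeGroup.of i))) = _
  rw [← MonoidHom.comp_apply, alpha_kappa1, PushoutI.of_apply_eq_base]

variable {L₁ L₂ x y}
variable (hx : Function.Injective (phifam L₁ L₂ x y true))
variable (hy : Function.Injective (phifam L₁ L₂ x y false))

include hx hy

lemma phifam_injective : ∀ b, Function.Injective (phifam L₁ L₂ x y b) := by
  intro b; cases b
  · exact hy
  · exact hx

lemma kappa1_injective : Function.Injective (kappa1 L₁ L₂ x y) := by
  intro a b hab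
  refine PushoutI.of_injective (phifam_injective hx hy) true ?_
  have h1 := DFunLike.congr_fun (alpha_kappa1 L₁ L₂ x y) a
  have h2 := DFunLike.congr_fun (alpha_kappa1 L₁ L₂ x y) b
  simp only [MonoidHom.comp_apply] at h1 h2
  rw [← h1, ← h2, hab]

lemma kappa2_injective : Function.Injective (kappa2 L₁ L₂ x y) := by
  intro a b hab
  refine PushoutI.of_injective (phifam_injective hx hy) false ?_
  have h1 := DFunLike.congr_fun (alpha_kappa2 L₁ L₂ x y) a
  have h2 := DFunLike.congr_fun (alpha_kappa2 L₁ L₂ x y) b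
  simp only [MonoidHom.comp_apply] at h1 h2
  rw [← h1, ← h2, hab]

lemma emI_injective : Function.Injective (emI L₁ L₂ x y) := by
  intro a b hab
  refine PushoutI.base_injective (phifam_injective hx hy) ?_
  have h1 := DFunLike.congr_fun (alpha_emI L₁ L₂ x y) a
  have h2 := DFunLike.congr_fun (alpha_emI L₁ L₂ x y) b
  simp only [MonoidHom.comp_apply] at h1 h2
  rw [← h1, ← h2, hab]

omit hx hy in
lemma tau1_eq : (pgMk (Ramal L₁ L₂ x y)).comp iota1 =
    (kappa1 L₁ L₂ x y).comp (pgMk L₁) := by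
  apply FreeGroup.ext_hom
  intro m
  exact (kappa1_pgMk L₁ L₂ x y (FreeGroup.of m)).symm

omit hx hy in
lemma tau2_eq : (pgMk (Ramal L₁ L₂ x y)).comp iota2 =
    (kappa2 L₁ L₂ x y).comp (pgMk L₂) := by
  apply FreeGroup.ext_hom
  intro m
  exact (kappa2_pgMk L₁ L₂ x y (FreeGroup.of m)).symm

lemma ker_tau1 : MonoidHom.ker ((pgMk (Ramal L₁ L₂ x y)).comp iota1) =
    Subgroup.normalClosure L₁ := by
  ext w
  rw [MonoidHom.mem_ker]
  rw [tau1_eq (L₂ := L₂) (x := x) (y := y)]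
  show kappa1 L₁ L₂ x y (pgMk L₁ w) = 1 ↔ _
  rw [← map_one (kappa1 L₁ L₂ x y), (kappa1_injective hx hy).eq_iff]
  exact QuotientGroup.eq_one_iff w

lemma ker_tau2 : MonoidHom.ker ((pgMk (Ramal L₁ L₂ x y)).comp iota2) =
    Subgroup.normalClosure L₂ := by
  ext w
  rw [MonoidHom.mem_ker]
  rw [tau2_eq (L₁ := L₁) (x := x) (y := y)]
  show kappa2 L₁ L₂ x y (pgMk L₂ w) = 1 ↔ _
  rw [← map_one (kappa2 L₁ L₂ x y), (kappa2_injective hx hy).eq_iff]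
  exact QuotientGroup.eq_one_iff w

end Defs

end Amalgam

section Piece

variable {β : Type} {G : Type} [Group G] {W : Type} [AddCommGroup W]

/-- Right-translation action of `G` on `G → W`. -/
def actAut (G : Type) [Group G] (W : Type) [AddCommGroup W] :
    G →* MulAut (Multiplicative (G → W)) where
  toFun g₀ :=
    { toFun := fun φ => Multiplicative.ofAdd (fun γ => φ.toAdd (γ * g₀))
      invFun := fun φ => Multiplicative.ofAdd (fun γ => φ.toAdd (γ * g₀⁻¹))
      left_inv := fun φ => Multiplicative.toAdd.injective (funext fun γ => by simp)
      right_inv := fun φ => Multiplicative.toAdd.injective (funext fun γ => by simp)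
      map_mul' := fun φ ψ => Multiplicative.toAdd.injective (funext fun γ => rfl) }
  map_one' := MulEquiv.ext fun φ => Multiplicative.toAdd.injective (funext fun γ => by simp)
  map_mul' g₁ g₂ := MulEquiv.ext fun φ => Multiplicative.toAdd.injective (funext fun γ => by
    show φ.toAdd (γ * (g₁ * g₂)) = _
    simp [mul_assoc])

@[simp] lemma actAut_apply (g₀ : G) (φ : Multiplicative (G → W)) (γ : G) :
    ((actAut G W g₀ φ) : Multiplicative (G → W)).toAdd γ = φ.toAdd (γ * g₀) := rfl

variable (Lb : Set (FreeGroup β)) (τ : FreeGroup β →* G)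

/-- The value homomorphism attached to prescribed relator values. -/
def psiV (E : Lb → (G → W)) : FreeGroup (FreeGroup β × Lb) →* Multiplicative (G → W) :=
  FreeGroup.lift fun p => Multiplicative.ofAdd (fun γ => E p.2 (γ * τ p.1))

variable (hker : MonoidHom.ker τ = Subgroup.normalClosure Lb)

include hker in
lemma tau_rel {l : FreeGroup β} (hl : l ∈ Subgroup.normalClosure Lb) : τ l = 1 := by
  rw [← MonoidHom.mem_ker, hker]; exact hl

include hker in
lemma psiV_peiffer (E : Lb → (G → W)) :
    ∀ z ∈ PeifferSet Lb, psiV Lb τ E z = 1 := by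
  rintro z ⟨f, g, r, s, rfl⟩
  simp only [map_mul, map_inv, psiV, FreeGroup.lift_apply_of]
  have hr : τ (r : FreeGroup β) = 1 :=
    tau_rel Lb τ hker (Subgroup.subset_normalClosure r.2)
  apply Multiplicative.toAdd.injective
  ext γ
  simp [hr, mul_assoc]

variable (hCA : CombAspherical Lb)

open Classical in
noncomputable def prew (n : FreeGroup β) : FreeGroup (FreeGroup β × Lb) :=
  if h : ∃ w, idMap Lb w = n then h.choose else 1

include hCA hker in
lemma psiV_welldef (E : Lb → (G → W)) {w w' : FreeGroup (FreeGroup β × Lb)}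
    (h : idMap Lb w = idMap Lb w') : psiV Lb τ E w = psiV Lb τ E w' := by
  have hk : w * w'⁻¹ ∈ MonoidHom.ker (idMap Lb) := by
    rw [MonoidHom.mem_ker, map_mul, map_inv, h, mul_inv_cancel]
  have := ker_le_of_CA hCA (psiV Lb τ E) (psiV_peiffer Lb τ hker E) hk
  rw [MonoidHom.mem_ker, map_mul, map_inv] at this
  exact (mul_inv_eq_one.mp this)

noncomputable def nuV (E : Lb → (G → W)) (n : FreeGroup β) : G → W :=
  (psiV Lb τ E (prew Lb n)).toAdd

include hCA hker in
lemma nuV_spec (E : Lb → (G → W)) (w : FreeGroup (FreeGroup β × Lb)) :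
    nuV Lb τ E (idMap Lb w) = (psiV Lb τ E w).toAdd := by
  unfold nuV prew
  have hex : ∃ w', idMap Lb w' = idMap Lb w := ⟨w, rfl⟩
  rw [dif_pos hex]
  exact congrArg Multiplicative.toAdd (psiV_welldef Lb τ hker hCA E hex.choose_spec)

include hker in
lemma mem_range_idMap {n : FreeGroup β} (hn : τ n = 1) : ∃ w, idMap Lb w = n := by
  have : n ∈ (idMap Lb).range := by
    rw [idMap_range, ← hker, MonoidHom.mem_ker]; exact hn
  exact this

include hCA hker in
lemma nuV_mul (E : Lb → (G → W)) {n n' : FreeGroup β} (hn : τ n = 1) (hn' : τ n' = 1) :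
    nuV Lb τ E (n * n') = nuV Lb τ E n + nuV Lb τ E n' := by
  obtain ⟨w, rfl⟩ := mem_range_idMap Lb τ hker hn
  obtain ⟨w', rfl⟩ := mem_range_idMap Lb τ hker hn'
  rw [← map_mul, nuV_spec Lb τ hker hCA, nuV_spec Lb τ hker hCA, nuV_spec Lb τ hker hCA,
    map_mul]
  rfl

include hCA hker in
lemma nuV_conj (E : Lb → (G → W)) {n : FreeGroup β} (hn : τ n = 1) (g : FreeGroup β) :
    nuV Lb τ E (g * n * g⁻¹) = fun γ => nuV Lb τ E n (γ * τ g) := by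
  obtain ⟨w, rfl⟩ := mem_range_idMap Lb τ hker hn
  have h1 : g * idMap Lb w * g⁻¹ = idMap Lb (actMap Lb g w) := (idMap_actMap g w).symm
  rw [h1, nuV_spec Lb τ hker hCA, nuV_spec Lb τ hker hCA]
  have hhom : (psiV Lb τ E).comp (actMap Lb g) =
      ((actAut G W (τ g)).toMonoidHom).comp (psiV Lb τ E) := by
    apply FreeGroup.ext_hom
    intro p
    simp only [MonoidHom.comp_apply, actMap_of, psiV, FreeGroup.lift_apply_of]
    apply Multiplicative.toAdd.injective
    ext γ
    simp [map_mul, mul_assoc]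
  have := DFunLike.congr_fun hhom w
  simp only [MonoidHom.comp_apply] at this
  rw [this]
  rfl

section Trick

noncomputable def repg (γ : G) : G := (QuotientGroup.mk (s := τ.range) γ).out

lemma repg_spec (γ : G) : (repg τ γ)⁻¹ * γ ∈ τ.range :=
  QuotientGroup.eq.mp ((QuotientGroup.mk (s := τ.range) γ).out_eq')

lemma repg_tau (γ : G) (f : FreeGroup β) : repg τ (γ * τ f) = repg τ γ := by
  unfold repg
  congr 1
  exact (QuotientGroup.eq).mpr (by
    have : (γ * τ f)⁻¹ * γ = (τ f)⁻¹ * (γ⁻¹ * γ) := by group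
    rw [this, inv_mul_cancel, mul_one]
    exact Subgroup.inv_mem _ ⟨f, rfl⟩)

noncomputable def sfun (γ : G) : FreeGroup β :=
  (MonoidHom.mem_range.mp (repg_spec τ γ)).choose

lemma sfun_spec (γ : G) : τ (sfun τ γ) = (repg τ γ)⁻¹ * γ :=
  (MonoidHom.mem_range.mp (repg_spec τ γ)).choose_spec

noncomputable def conjw (γ : G) (f : FreeGroup β) : FreeGroup β :=
  sfun τ γ * f * (sfun τ (γ * τ f))⁻¹

lemma conjw_ker (γ : G) (f : FreeGroup β) : τ (conjw τ γ f) = 1 := by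
  unfold conjw
  rw [map_mul, map_mul, map_inv, sfun_spec, sfun_spec, repg_tau]
  group

noncomputable def dV (E : Lb → (G → W)) (f : FreeGroup β) : G → W :=
  fun γ => nuV Lb τ E (conjw τ γ f) (repg τ γ)

variable (E : Lb → (G → W))

include hker hCA in
lemma dV_one : dV Lb τ E (1 : FreeGroup β) = 0 := by
  funext γ
  have hc : conjw τ γ (1 : FreeGroup β) = 1 := by
    unfold conjw
    rw [map_one, mul_one]
    group
  have hn : nuV Lb τ E (idMap Lb 1) = (psiV Lb τ E 1).toAdd := nuV_spec Lb τ hker hCA E 1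
  rw [map_one, map_one] at hn
  unfold dV
  rw [hc, hn]
  rfl

include hker hCA in
lemma dV_mul (a b : FreeGroup β) :
    dV Lb τ E (a * b) = (fun γ => dV Lb τ E a γ + dV Lb τ E b (γ * τ a)) := by
  funext γ
  have key1 : conjw τ γ (a * b) = conjw τ γ a * conjw τ (γ * τ a) b := by
    unfold conjw
    rw [map_mul, ← mul_assoc]
    group
  unfold dV
  rw [key1]
  rw [congrFun (nuV_mul Lb τ hker hCA E (conjw_ker τ γ a) (conjw_ker τ (γ * τ a) b))
    (repg τ γ), Pi.add_apply, repg_tau τ γ a]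

include hker hCA in
lemma dV_rel {l : FreeGroup β} (hl : l ∈ Lb) : dV Lb τ E l = E ⟨l, hl⟩ := by
  funext γ
  have hτl : τ l = 1 := tau_rel Lb τ hker (Subgroup.subset_normalClosure hl)
  have hc : conjw τ γ l = sfun τ γ * l * (sfun τ γ)⁻¹ := by
    unfold conjw
    rw [hτl, mul_one]
  have hid : idMap Lb (FreeGroup.of ((1 : FreeGroup β), (⟨l, hl⟩ : Lb))) = l := by
    rw [idMap_of]; group
  have hnul : nuV Lb τ E l = fun γ' => E ⟨l, hl⟩ γ' := by
    have := nuV_spec Lb τ hker hCA E (FreeGroup.of ((1 : FreeGroup β), (⟨l, hl⟩ : Lb)))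
    rw [hid] at this
    rw [this]
    funext γ'
    show (psiV Lb τ E (FreeGroup.of _)).toAdd γ' = _
    unfold psiV
    rw [FreeGroup.lift_apply_of]
    simp
  have hconj := nuV_conj Lb τ hker hCA E (n := l) hτl (sfun τ γ)
  unfold dV
  rw [hc, hconj, sfun_spec]
  show nuV Lb τ E l (repg τ γ * ((repg τ γ)⁻¹ * γ)) = E ⟨l, hl⟩ γ
  rw [mul_inv_cancel_left, hnul]

/-- The piece homomorphism: a crossed derivation with prescribed values on the
relators. -/
noncomputable def PhiP : FreeGroup β →* (Multiplicative (G → W) ⋊[actAut G W] G) where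
  toFun f := ⟨Multiplicative.ofAdd (dV Lb τ E f), τ f⟩
  map_one' := by
    show (⟨Multiplicative.ofAdd (dV Lb τ E 1), τ 1⟩ :
      Multiplicative (G → W) ⋊[actAut G W] G) = 1
    rw [dV_one Lb τ hker hCA, map_one]
    rfl
  map_mul' a b := by
    show (⟨Multiplicative.ofAdd (dV Lb τ E (a * b)), τ (a * b)⟩ :
        Multiplicative (G → W) ⋊[actAut G W] G) =
      (⟨Multiplicative.ofAdd (dV Lb τ E a), τ a⟩ :
        Multiplicative (G → W) ⋊[actAut G W] G) *
      ⟨Multiplicative.ofAdd (dV Lb τ E b), τ b⟩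
    rw [SemidirectProduct.mul_def]
    have hleft : Multiplicative.ofAdd (dV Lb τ E (a * b)) =
        Multiplicative.ofAdd (dV Lb τ E a) *
          (actAut G W (τ a)) (Multiplicative.ofAdd (dV Lb τ E b)) := by
      apply Multiplicative.toAdd.injective
      funext γ
      rw [dV_mul Lb τ hker hCA]
      rfl
    rw [map_mul, hleft]

lemma PhiP_right (f : FreeGroup β) : (PhiP Lb τ hker hCA E f).right = τ f := rfl

lemma PhiP_rel {l : FreeGroup β} (hl : l ∈ Lb) :
    PhiP Lb τ hker hCA E l =
      SemidirectProduct.inl (Multiplicative.ofAdd (E ⟨l, hl⟩)) := by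
  have h1 : PhiP Lb τ hker hCA E l = ⟨Multiplicative.ofAdd (dV Lb τ E l), τ l⟩ := rfl
  rw [h1, dV_rel Lb τ hker hCA E hl, tau_rel Lb τ hker (Subgroup.subset_normalClosure hl)]
  rfl

end Trick

end Piece

section Integration

variable {H G W : Type} [Group H] [Group G] [AddCommGroup W]

noncomputable def repS (e : H →* G) (γ : G) : G := (QuotientGroup.mk (s := e.range) γ).out

lemma repS_spec (e : H →* G) (γ : G) : (repS e γ)⁻¹ * γ ∈ e.range :=
  QuotientGroup.eq.mp ((QuotientGroup.mk (s := e.range) γ).out_eq')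

lemma repS_mul (e : H →* G) (γ : G) (h : H) : repS e (γ * e h) = repS e γ := by
  unfold repS
  congr 1
  exact (QuotientGroup.eq).mpr (by
    have : (γ * e h)⁻¹ * γ = (e h)⁻¹ * (γ⁻¹ * γ) := by group
    rw [this, inv_mul_cancel, mul_one]
    exact Subgroup.inv_mem _ ⟨h, rfl⟩)

noncomputable def hfun (e : H →* G) (γ : G) : H :=
  (MonoidHom.mem_range.mp (repS_spec e γ)).choose

lemma hfun_spec (e : H →* G) (γ : G) : e (hfun e γ) = (repS e γ)⁻¹ * γ :=
  (MonoidHom.mem_range.mp (repS_spec e γ)).choose_spec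

theorem derivation_principal (e : H →* G) (he : Function.Injective e)
    (Θ : H →* Multiplicative (G → W) ⋊[actAut G W] G)
    (hsnd : ∀ h, (Θ h).right = e h) :
    ∃ u : G → W, ∀ (h : H) (γ : G),
      (Θ h).left.toAdd γ = u (γ * e h) - u γ := by
  refine ⟨fun γ => (Θ (hfun e γ)).left.toAdd (repS e γ), ?_⟩
  intro h γ
  have h1 : hfun e (γ * e h) = hfun e γ * h := by
    apply he
    rw [hfun_spec, map_mul, hfun_spec, repS_mul]
    group
  show Multiplicative.toAdd (Θ h).left γ =
    Multiplicative.toAdd (Θ (hfun e (γ * e h))).left (repS e (γ * e h)) -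
      Multiplicative.toAdd (Θ (hfun e γ)).left (repS e γ)
  rw [h1, repS_mul]
  have h2 : (Θ (hfun e γ * h)).left = (Θ (hfun e γ)).left *
      (actAut G W ((Θ (hfun e γ)).right)) (Θ h).left := by
    rw [map_mul]
    rfl
  rw [h2]
  have h3 : ((Θ (hfun e γ)).left * (actAut G W ((Θ (hfun e γ)).right)) (Θ h).left).toAdd
      (repS e γ) = (Θ (hfun e γ)).left.toAdd (repS e γ) +
        (Θ h).left.toAdd (repS e γ * (Θ (hfun e γ)).right) := rfl
  rw [h3, hsnd, hfun_spec, mul_inv_cancel_left]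
  abel

variable {K : Type} [Group K]

lemma sdp_left_mul (A B : Multiplicative (G → W) ⋊[actAut G W] G) (γ : G) :
    ((A * B).left).toAdd γ = A.left.toAdd γ + B.left.toAdd (γ * A.right) := rfl

/-- Twisting a homomorphism into the semidirect product by a principal derivation. -/
noncomputable def twist (Φ : K →* Multiplicative (G → W) ⋊[actAut G W] G) (u : G → W) :
    K →* Multiplicative (G → W) ⋊[actAut G W] G where
  toFun k := ⟨Multiplicative.ofAdd
      (fun γ => (Φ k).left.toAdd γ + (u (γ * (Φ k).right) - u γ)), (Φ k).right⟩
  map_one' := by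
    apply SemidirectProduct.ext
    · apply Multiplicative.toAdd.injective
      funext γ
      show (Φ 1).left.toAdd γ + (u (γ * (Φ 1).right) - u γ) = _
      rw [map_one]
      show (1 : Multiplicative (G → W)).toAdd γ + (u (γ * 1) - u γ) = (1 : Multiplicative (G → W)).toAdd γ
      rw [mul_one]
      abel
    · show (Φ 1).right = 1
      rw [map_one]; rfl
  map_mul' a b := by
    apply SemidirectProduct.ext
    · apply Multiplicative.toAdd.injective
      funext γ
      show (Φ (a * b)).left.toAdd γ + (u (γ * (Φ (a * b)).right) - u γ) = _
      have hr : (Φ (a * b)).right = (Φ a).right * (Φ b).right := by rw [map_mul]; rfl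
      have hl : (Φ (a * b)).left.toAdd γ =
          (Φ a).left.toAdd γ + (Φ b).left.toAdd (γ * (Φ a).right) := by
        rw [map_mul]; rfl
      rw [hr, hl]
      show _ = ((Φ a).left.toAdd γ + (u (γ * (Φ a).right) - u γ)) +
        ((Φ b).left.toAdd ((γ * (Φ a).right)) +
          (u ((γ * (Φ a).right) * (Φ b).right) - u (γ * (Φ a).right)))
      rw [← mul_assoc]
      abel
    · show (Φ (a * b)).right = (Φ a).right * (Φ b).right
      rw [map_mul]; rfl

lemma twist_right (Φ : K →* Multiplicative (G → W) ⋊[actAut G W] G) (u : G → W) (k : K) :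
    (twist Φ u k).right = (Φ k).right := rfl

lemma twist_left (Φ : K →* Multiplicative (G → W) ⋊[actAut G W] G) (u : G → W) (k : K) (γ : G) :
    (twist Φ u k).left.toAdd γ = (Φ k).left.toAdd γ + (u (γ * (Φ k).right) - u γ) := rfl

lemma twist_eq_of_right_one (Φ : K →* Multiplicative (G → W) ⋊[actAut G W] G) (u : G → W)
    (k : K) (hk : (Φ k).right = 1) : twist Φ u k = Φ k := by
  apply SemidirectProduct.ext
  · apply Multiplicative.toAdd.injective
    funext γ
    rw [twist_left, hk, mul_one]
    abel
  · rw [twist_right, hk]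

lemma sdp_conj_inl (A : Multiplicative (G → W) ⋊[actAut G W] G) (n : Multiplicative (G → W)) :
    A * SemidirectProduct.inl n * A⁻¹ = SemidirectProduct.inl (actAut G W A.right n) := by
  have hA : A = SemidirectProduct.inl A.left * SemidirectProduct.inr A.right :=
    (SemidirectProduct.inl_left_mul_inr_right A).symm
  have key := SemidirectProduct.inl_aut (φ := actAut G W) A.right n
  calc A * SemidirectProduct.inl n * A⁻¹
      = (SemidirectProduct.inl A.left * SemidirectProduct.inr A.right) *
          SemidirectProduct.inl n *
          (SemidirectProduct.inl A.left * SemidirectProduct.inr A.right)⁻¹ := by rw [← hA]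
    _ = SemidirectProduct.inl A.left *
          (SemidirectProduct.inr A.right * SemidirectProduct.inl n *
            (SemidirectProduct.inr A.right)⁻¹) * (SemidirectProduct.inl A.left)⁻¹ := by group
    _ = SemidirectProduct.inl A.left *
          (SemidirectProduct.inr A.right * SemidirectProduct.inl n *
            SemidirectProduct.inr A.right⁻¹) * SemidirectProduct.inl A.left⁻¹ := by
        rw [map_inv, map_inv]
    _ = SemidirectProduct.inl A.left * SemidirectProduct.inl (actAut G W A.right n) *
          SemidirectProduct.inl A.left⁻¹ := by rw [← key]
    _ = SemidirectProduct.inl (A.left * actAut G W A.right n * A.left⁻¹) := by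
        rw [map_mul, map_mul]
    _ = SemidirectProduct.inl (actAut G W A.right n) := by
        rw [mul_comm A.left, mul_inv_cancel_right]

end Integration

section Assembly

open Monoid

variable {M₁ M₂ I : Type}
variable (L₁ : Set (FreeGroup M₁)) (L₂ : Set (FreeGroup M₂))
variable (x : I → FreeGroup M₁) (y : I → FreeGroup M₂)

/-- The basic indicator-valued function on relators. -/
noncomputable def EfunA (t : Ramal L₁ L₂ x y) :
    PGam L₁ L₂ x y → (↥(Ramal L₁ L₂ x y) → ℤ) :=
  fun γ ρ => Finsupp.single ((1 : PGam L₁ L₂ x y), t) (1 : ℤ) (γ, ρ)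

theorem amalgam_CA
    (hCA1 : CombAspherical L₁) (hCA2 : CombAspherical L₂)
    (hx : Function.Injective (phifam L₁ L₂ x y true))
    (hy : Function.Injective (phifam L₁ L₂ x y false)) :
    CombAspherical (Ramal L₁ L₂ x y) := by
  classical
  set Rm := Ramal L₁ L₂ x y with hRm
  let G := PGam L₁ L₂ x y
  let W : Type := ↥Rm → ℤ
  let π : FreeGroup (M₁ ⊕ M₂) →* G := pgMk Rm
  let τ₁ : FreeGroup M₁ →* G := π.comp iota1
  let τ₂ : FreeGroup M₂ →* G := π.comp iota2
  have hker1 : MonoidHom.ker τ₁ = Subgroup.normalClosure L₁ := ker_tau1 hx hy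
  have hker2 : MonoidHom.ker τ₂ = Subgroup.normalClosure L₂ := ker_tau2 hx hy
  let E1 : L₁ → (G → W) := fun l => EfunA L₁ L₂ x y ⟨iota1 l.1, mem_Ramal_left L₁ L₂ x y l.2⟩
  let E2 : L₂ → (G → W) := fun l => EfunA L₁ L₂ x y ⟨iota2 l.1, mem_Ramal_right L₁ L₂ x y l.2⟩
  let Φ₁ := PhiP L₁ τ₁ hker1 hCA1 E1
  let Φ₂ := PhiP L₂ τ₂ hker2 hCA2 E2
  let tEl : I → ↥Rm := fun i =>
    ⟨iota1 (x i) * (iota2 (y i))⁻¹, mem_Ramal_rel L₁ L₂ x y i⟩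
  let cfun : I → (G → W) := fun i γ =>
    (Φ₂ (y i)).left.toAdd γ + EfunA L₁ L₂ x y (tEl i) γ - (Φ₁ (x i)).left.toAdd γ
  let Θ : FreeGroup I →* Multiplicative (G → W) ⋊[actAut G W] G :=
    FreeGroup.lift fun i => ⟨Multiplicative.ofAdd (cfun i), emI L₁ L₂ x y (FreeGroup.of i)⟩
  have hsnd : ∀ h, (Θ h).right = emI L₁ L₂ x y h := by
    have hcomp : SemidirectProduct.rightHom.comp Θ = emI L₁ L₂ x y := by
      apply FreeGroup.ext_hom
      intro i
      simp only [MonoidHom.comp_apply, Θ, FreeGroup.lift_apply_of]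
      rfl
    intro h
    exact DFunLike.congr_fun hcomp h
  obtain ⟨u, hu⟩ := derivation_principal (emI L₁ L₂ x y) (emI_injective hx hy) Θ hsnd
  have hu' : ∀ (i : I) (γ : G), cfun i γ = u (γ * π (iota1 (x i))) - u γ := by
    intro i γ
    have h1 := hu (FreeGroup.of i) γ
    have h2 : (Θ (FreeGroup.of i)).left = Multiplicative.ofAdd (cfun i) := by
      simp only [Θ, FreeGroup.lift_apply_of]
    have h3 : emI L₁ L₂ x y (FreeGroup.of i) = π (iota1 (x i)) := by
      show kappa1 L₁ L₂ x y (phifam L₁ L₂ x y true (FreeGroup.of i)) = _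
      rw [show phifam L₁ L₂ x y true (FreeGroup.of i) = pgMk L₁ (x i) from FreeGroup.lift_apply_of,
        kappa1_pgMk]
    rw [h2, h3] at h1
    exact h1
  let Φ₁' := twist Φ₁ u
  let PhiBig : FreeGroup (M₁ ⊕ M₂) →* Multiplicative (G → W) ⋊[actAut G W] G :=
    FreeGroup.lift (Sum.elim (fun m => Φ₁' (FreeGroup.of m)) (fun m => Φ₂ (FreeGroup.of m)))
  have hb1 : ∀ f, PhiBig (iota1 f) = Φ₁' f := by
    have hcomp : PhiBig.comp iota1 = Φ₁' := by
      apply FreeGroup.ext_hom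
      intro m
      simp only [MonoidHom.comp_apply, iota1, FreeGroup.map.of, PhiBig, FreeGroup.lift_apply_of]
      rfl
    intro f
    exact DFunLike.congr_fun hcomp f
  have hb2 : ∀ f, PhiBig (iota2 f) = Φ₂ f := by
    have hcomp : PhiBig.comp iota2 = Φ₂ := by
      apply FreeGroup.ext_hom
      intro m
      simp only [MonoidHom.comp_apply, iota2, FreeGroup.map.of, PhiBig, FreeGroup.lift_apply_of]
      rfl
    intro f
    exact DFunLike.congr_fun hcomp f
  have hright : ∀ f, (PhiBig f).right = π f := by
    have hcomp : SemidirectProduct.rightHom.comp PhiBig = π := by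
      apply FreeGroup.ext_hom
      intro m
      cases m with
      | inl m =>
        show SemidirectProduct.rightHom (PhiBig (FreeGroup.of (Sum.inl m))) = _
        have : FreeGroup.of (Sum.inl m) = iota1 (M₂ := M₂) (FreeGroup.of m) := by
          simp [iota1]
        rw [this, hb1]
        show (Φ₁' (FreeGroup.of m)).right = _
        rw [twist_right]
        show τ₁ (FreeGroup.of m) = π (iota1 (FreeGroup.of m))
        rfl
      | inr m =>
        show SemidirectProduct.rightHom (PhiBig (FreeGroup.of (Sum.inr m))) = _
        have : FreeGroup.of (Sum.inr m) = iota2 (M₁ := M₁) (FreeGroup.of m) := by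
          simp [iota2]
        rw [this, hb2]
        show (Φ₂ (FreeGroup.of m)).right = _
        rfl
    intro f
    exact DFunLike.congr_fun hcomp f
  -- the relator values
  have hrel : ∀ (r : FreeGroup (M₁ ⊕ M₂)) (hr : r ∈ Rm),
      PhiBig r = SemidirectProduct.inl (Multiplicative.ofAdd (EfunA L₁ L₂ x y ⟨r, hr⟩)) := by
    rintro r hr
    have hr2 : r ∈ Rm := hr
    rcases hr2 with ((⟨l, hl, rfl⟩ | ⟨l, hl, rfl⟩) | ⟨i, rfl⟩)
    · have hτ : (Φ₁ l).right = 1 := by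
        show τ₁ l = 1
        exact tau_rel L₁ τ₁ hker1 (Subgroup.subset_normalClosure hl)
      rw [hb1, twist_eq_of_right_one Φ₁ u l hτ, PhiP_rel L₁ τ₁ hker1 hCA1 E1 hl]
    · have hτ : (Φ₂ l).right = 1 := by
        show τ₂ l = 1
        exact tau_rel L₂ τ₂ hker2 (Subgroup.subset_normalClosure hl)
      rw [hb2, PhiP_rel L₂ τ₂ hker2 hCA2 E2 hl]
    · -- mixed relator
      have hxy : π (iota1 (x i)) = π (iota2 (y i)) := pgam_rel L₁ L₂ x y i
      rw [map_mul, map_inv, hb1, hb2]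
      apply SemidirectProduct.ext
      · apply Multiplicative.toAdd.injective
        funext γ
        rw [sdp_left_mul]
        have hAl : (Φ₁' (x i)).left.toAdd γ =
            (Φ₁ (x i)).left.toAdd γ + (u (γ * τ₁ (x i)) - u γ) := by
          rw [twist_left]
          rfl
        have hAr : (Φ₁' (x i)).right = τ₁ (x i) := twist_right Φ₁ u (x i)
        have hBinvl : ∀ δ : G, ((Φ₂ (y i))⁻¹.left).toAdd δ =
            -(Φ₂ (y i)).left.toAdd (δ * ((Φ₂ (y i)).right)⁻¹) := by
          intro δ
          rw [SemidirectProduct.inv_left]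
          rfl
        rw [hAl, hAr, hBinvl]
        have hBr : (Φ₂ (y i)).right = τ₂ (y i) := rfl
        have hγ : γ * τ₁ (x i) * ((Φ₂ (y i)).right)⁻¹ = γ := by
          rw [hBr]
          show γ * π (iota1 (x i)) * (π (iota2 (y i)))⁻¹ = γ
          rw [← hxy, mul_inv_cancel_right]
        rw [hγ]
        have : u (γ * τ₁ (x i)) - u γ = cfun i γ := (hu' i γ).symm
        rw [this]
        show (Φ₁ (x i)).left.toAdd γ +
            ((Φ₂ (y i)).left.toAdd γ + EfunA L₁ L₂ x y (tEl i) γ -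
              (Φ₁ (x i)).left.toAdd γ) +
            -(Φ₂ (y i)).left.toAdd γ = EfunA L₁ L₂ x y (tEl i) γ
        abel
      · show (Φ₁' (x i)).right * ((Φ₂ (y i))⁻¹).right = 1
        rw [SemidirectProduct.inv_right, twist_right]
        show τ₁ (x i) * (τ₂ (y i))⁻¹ = 1
        show π (iota1 (x i)) * (π (iota2 (y i)))⁻¹ = 1
        rw [hxy, mul_inv_cancel]
  -- conjugation formula
  let chiV : FreeGroup (FreeGroup (M₁ ⊕ M₂) × Rm) →* Multiplicative (G → W) :=
    FreeGroup.lift fun p => Multiplicative.ofAdd (fun γ => EfunA L₁ L₂ x y p.2 (γ * π p.1))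
  have hXi : PhiBig.comp (idMap Rm) =
      (SemidirectProduct.inl (φ := actAut G W)).comp chiV := by
    apply FreeGroup.ext_hom
    intro p
    simp only [MonoidHom.comp_apply, idMap_of, chiV, FreeGroup.lift_apply_of]
    rw [map_mul, map_mul, map_inv]
    rw [hrel p.2.1 p.2.2]
    have : (⟨(p.2 : FreeGroup (M₁ ⊕ M₂)), p.2.2⟩ : ↥Rm) = p.2 :=
      Subtype.ext rfl
    rw [this]
    rw [sdp_conj_inl, hright]
    rfl
  -- conclusion
  show MonoidHom.ker (idMap Rm) = Subgroup.normalClosure (PeifferSet Rm)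
  apply le_antisymm
  · intro w hw
    rw [MonoidHom.mem_ker] at hw
    have h1 : SemidirectProduct.inl (φ := actAut G W) (chiV w) = 1 := by
      have := DFunLike.congr_fun hXi w
      simp only [MonoidHom.comp_apply] at this
      rw [← this, hw, map_one]
    have h2 : chiV w = 1 := SemidirectProduct.inl_injective h1
    -- transfer to chiA
    have hJ : ∀ v : FreeGroup (FreeGroup (M₁ ⊕ M₂) × Rm),
        (fun γ ρ => ((chiA Rm v).toAdd) (γ⁻¹, ρ)) = (chiV v).toAdd := by
      intro v
      let jadd : ((G × ↥Rm) →₀ ℤ) →+ (G → W) :=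
        AddMonoidHom.mk' (fun a => fun γ ρ => a (γ⁻¹, ρ)) (by
          intro a b
          funext γ ρ
          simp)
      have hcomp : (AddMonoidHom.toMultiplicative jadd).comp (chiA Rm) = chiV := by
        apply FreeGroup.ext_hom
        intro p
        have e1 : chiA Rm (FreeGroup.of p) =
            Multiplicative.ofAdd (Finsupp.single (pgMk Rm p.1, p.2) 1) := by
          simp [chiA]
        simp only [MonoidHom.comp_apply, e1]
        have e2 : chiV (FreeGroup.of p) =
            Multiplicative.ofAdd (fun γ => EfunA L₁ L₂ x y p.2 (γ * pgMk Rm p.1)) :=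
          FreeGroup.lift_apply_of
        rw [e2]
        apply Multiplicative.toAdd.injective
        funext γ ρ
        show (Finsupp.single ((pgMk Rm) p.1, p.2) (1:ℤ)) (γ⁻¹, ρ) =
          (Finsupp.single ((1 : G), p.2) (1:ℤ)) (γ * pgMk Rm p.1, ρ)
        rw [Finsupp.single_apply, Finsupp.single_apply]
        have hiff : ((pgMk Rm p.1, p.2) = (γ⁻¹, ρ)) ↔
            (((1 : G), p.2) = (γ * pgMk Rm p.1, ρ)) := by
          rw [Prod.mk.injEq, Prod.mk.injEq]
          constructor
          · rintro ⟨h1, h2⟩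
            refine ⟨?_, h2⟩
            have hγ : γ = (pgMk Rm p.1)⁻¹ := by rw [h1, inv_inv]
            rw [hγ, inv_mul_cancel]
          · rintro ⟨h1, h2⟩
            refine ⟨?_, h2⟩
            have h3 : γ * pgMk Rm p.1 = 1 := h1.symm
            exact (mul_eq_one_iff_inv_eq.mp h3).symm
        rw [if_congr hiff rfl rfl]
      have := DFunLike.congr_fun hcomp v
      simp only [MonoidHom.comp_apply] at this
      rw [← this]
      rfl
    have h3 : chiA Rm w = 1 := by
      have h4 := hJ w
      rw [h2] at h4
      apply Multiplicative.toAdd.injective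
      apply Finsupp.ext
      rintro ⟨g, ρ⟩
      have h5 := congrFun (congrFun h4 g⁻¹) ρ
      simp only [inv_inv] at h5
      rw [h5]
      rfl
    exact mem_peiffer_of_chi w hw h3
  · exact peiffer_le_ker

end Assembly


/-- Combination lemma for amalgamated products: if `⟨M₁ ∣ L₁⟩` and `⟨M₂ ∣ L₂⟩`
are combinatorially aspherical and the families `{xᵢ}`, `{yᵢ}` freely generate
free subgroups of the respective groups, then the standard presentation
`P = ⟨M₁, M₂ ∣ L₁, L₂, xᵢ yᵢ⁻¹⟩` of the amalgamated product is combinatorially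
aspherical. -/
theorem amalgam_combinatorially_aspherical {M₁ M₂ I : Type}
    (L₁ : Set (FreeGroup M₁)) (L₂ : Set (FreeGroup M₂))
    (x : I → FreeGroup M₁) (y : I → FreeGroup M₂) :
    let ι₁ : FreeGroup M₁ →* FreeGroup (M₁ ⊕ M₂) := FreeGroup.map Sum.inl
    let ι₂ : FreeGroup M₂ →* FreeGroup (M₁ ⊕ M₂) := FreeGroup.map Sum.inr
    let R : Set (FreeGroup (M₁ ⊕ M₂)) :=
      (ι₁ '' L₁) ∪ (ι₂ '' L₂) ∪ Set.range fun i => ι₁ (x i) * (ι₂ (y i))⁻¹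
    CombAspherical L₁ → CombAspherical L₂ →
    Function.Injective
      (FreeGroup.lift (fun i => pgMk L₁ (x i)) : FreeGroup I →* PresentedGroup L₁) →
    Function.Injective
      (FreeGroup.lift (fun i => pgMk L₂ (y i)) : FreeGroup I →* PresentedGroup L₂) →
    CombAspherical R := by
  intro ι₁ ι₂ R hCA1 hCA2 hx hy
  exact amalgam_CA L₁ L₂ x y hCA1 hCA2 hx hy

end Paper
end
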